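/- The function h(ρ) = ρ² + 2ρ(1 − ln(1+ρ)) − 2ln(1+ρ) satisfies h(ρ) > 0 for all ρ ∈ (0,1); hence the equation (1−ρ)²·h(ρ) = 0 has no solution with 0 < ρ < 1. -/

import Mathlib

open Real

lemma bessel_aux_deriv (x : ℝ) (hx : 0 < 1 + x) :
    HasDerivAt (fun t : ℝ => t ^ 2 + 2 * t * (1 - Real.log (1 + t)) - 2 * Real.log (1 + t))
      (2 * (x - Real.log (1 + x))) x := by
  have hne : (1 : ℝ) + x ≠ 0 := ne_of_gt hx
  have hlog : HasDerivAt (fun t : ℝ => Real.log (1 + t)) (1 / (1 + x)) x := by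
    have h1 : HasDerivAt (fun t : ℝ => 1 + t) 1 x := (hasDerivAt_id x).const_add 1
    simpa using h1.log hne
  have hsq : HasDerivAt (fun t : ℝ => t ^ 2) (2 * x) x := by
    simpa using hasDerivAt_pow 2 x
  have hmid : HasDerivAt (fun t : ℝ => 2 * t * (1 - Real.log (1 + t)))
      (2 * (1 - Real.log (1 + x)) + 2 * x * (0 - 1 / (1 + x))) x := by
    have := ((hasDerivAt_id x).const_mul 2).mul ((hasDerivAt_const x 1).sub hlog)
    exact this.congr_deriv (by simp)
  have h := (hsq.add hmid).sub (hlog.const_mul 2)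
  refine h.congr_deriv ?_
  field_simp
  ring

lemma bessel_aux_pos (ρ : ℝ) (hρ : 0 < ρ) :
    0 < ρ ^ 2 + 2 * ρ * (1 - Real.log (1 + ρ)) - 2 * Real.log (1 + ρ) := by
  set f : ℝ → ℝ := fun t => t ^ 2 + 2 * t * (1 - Real.log (1 + t)) - 2 * Real.log (1 + t) with hf
  have hmono : StrictMonoOn f (Set.Ici (0 : ℝ)) := by
    apply strictMonoOn_of_deriv_pos (convex_Ici 0)
    · intro x hx
      have hx0 : (0 : ℝ) ≤ x := hx
      have h1x : 0 < 1 + x := by linarith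
      exact (bessel_aux_deriv x h1x).continuousAt.continuousWithinAt
    · intro x hx
      rw [interior_Ici] at hx
      have hxpos : 0 < x := hx
      have h1x : 0 < 1 + x := by linarith
      rw [(bessel_aux_deriv x h1x).deriv]
      have hlt : Real.log (1 + x) < x := by
        have := Real.log_lt_sub_one_of_pos h1x (by intro h; linarith)
        linarith
      linarith
  have h0 : f 0 = 0 := by simp [hf]
  have := hmono (Set.self_mem_Ici) (Set.mem_Ici.mpr hρ.le) hρ
  rw [h0] at this
  exact this

theorem bessel_obstruction :
    (∀ ρ : ℝ, 0 < ρ → ρ < 1 →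
      0 < ρ ^ 2 + 2 * ρ * (1 - Real.log (1 + ρ)) - 2 * Real.log (1 + ρ)) ∧
    ¬∃ ρ : ℝ, 0 < ρ ∧ ρ < 1 ∧
      (1 - ρ) ^ 2 *
        (ρ ^ 2 + 2 * ρ * (1 - Real.log (1 + ρ)) - 2 * Real.log (1 + ρ)) = 0 := by
  constructor
  · intro ρ hρ _
    exact bessel_aux_pos ρ hρ
  · rintro ⟨ρ, hρ0, hρ1, heq⟩
    have h1 : (1 - ρ) ^ 2 > 0 := pow_pos (by linarith) 2
    have h2 := bessel_aux_pos ρ hρ0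
    nlinarith
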